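/- Let Σ and Ξ be types, let p : List (Σ ⊕ Ξ) be a pattern, and let w : List Σ. Then w lies in the non-erasing pattern language of p (i.e., w = apply σ p for some substitution σ : Ξ → List Σ with σ x ≠ [] for every variable x occurring in p) if and only if there exists a list L : List (List Σ) with L.length = p.length and w = L.join such that for every index i < p.length: if the i-th entry of p is a terminal Sum.inl a then the i-th entry of L is [a]; if the i-th entry of p is a variable Sum.inr x then the i-th entry of L is nonempty; and for every index j < p.length whose entry is a variable Sum.inr x such that some earlier index carries the same variable, the j-th entry of L equals the i-th entry of L, where i is the largest index smaller than j carrying the variable Sum.inr x. (The word-level correctness of Algorithm 1 in Lemma 3.6 of the paper: checking equality only against the most recent previous occurrence of each variable characterizes membership in the non-erasing pattern language.) -/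

import Mathlib

/-- Applying a substitution `σ` to a pattern `p`: terminals map to one-element lists,
variables map to their image under `σ`. -/
def applySubst {A Ξ : Type*} (σ : Ξ → List A) (p : List (A ⊕ Ξ)) : List A :=
  (p.map (Sum.elim (fun a => [a]) σ)).flatten

theorem nonerasing_pattern_language_characterization {A Ξ : Type*}
    (p : List (A ⊕ Ξ)) (w : List A) :
    (∃ σ : Ξ → List A, (∀ x : Ξ, Sum.inr x ∈ p → σ x ≠ []) ∧ w = applySubst σ p) ↔
      ∃ L : List (List A), L.length = p.length ∧ w = L.flatten ∧
        (∀ i, i < p.length →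
          (∀ a : A, p[i]? = some (Sum.inl a) → L[i]? = some [a]) ∧
          (∀ x : Ξ, p[i]? = some (Sum.inr x) → L[i]? ≠ some [])) ∧
        (∀ j, j < p.length → ∀ x : Ξ, p[j]? = some (Sum.inr x) →
          ∀ i, i < j → p[i]? = some (Sum.inr x) →
            (∀ i', i < i' → i' < j → p[i']? ≠ some (Sum.inr x)) →
            L[j]? = L[i]?) := by
  classical
  constructor
  · rintro ⟨σ, hσ, rfl⟩
    refine ⟨p.map (Sum.elim (fun a => [a]) σ), by simp, rfl, ?_, ?_⟩
    · intro i hi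
      constructor
      · intro a ha
        simp [List.getElem?_map, ha]
      · intro x hx
        simp only [List.getElem?_map, hx, Option.map_some]
        intro h
        have hmem : Sum.inr x ∈ p := by
          have := List.getElem?_eq_some_iff.mp hx
          exact this.2 ▸ List.getElem_mem this.1
        exact hσ x hmem (by simpa [Sum.elim] using h)
    · intro j hj x hjx i hij hix _
      simp [List.getElem?_map, hjx, hix]
  · rintro ⟨L, hlen, rfl, h1, h2⟩
    have key : ∀ x : Ξ, ∀ j : ℕ, p[j]? = some (Sum.inr x) →
        ∀ i : ℕ, p[i]? = some (Sum.inr x) → i ≤ j → L[j]? = L[i]? := by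
      intro x j
      induction j using Nat.strong_induction_on with
      | _ j ih =>
        intro hj i hi hij
        rcases eq_or_lt_of_le hij with rfl | hlt
        · rfl
        · set P := fun k : ℕ => p[k]? = some (Sum.inr x) with hP
          have hi' : P i := hi
          set k := Nat.findGreatest P (j - 1) with hk
          have hik : i ≤ k := Nat.le_findGreatest (by omega) hi'
          have hkP : P k := Nat.findGreatest_spec (m := i) (by omega) hi'
          have hkj : k < j := lt_of_le_of_lt (Nat.findGreatest_le _) (by omega)
          have hj' : j < p.length := (List.getElem?_eq_some_iff.mp hj).1
          have hmax : ∀ i', k < i' → i' < j → p[i']? ≠ some (Sum.inr x) := by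
            intro i' h1' h2'
            exact Nat.findGreatest_is_greatest h1' (by omega)
          have hstep := h2 j hj' x hj k hkj hkP hmax
          rw [hstep]
          exact ih k hkj hkP i hi hik
    set σ : Ξ → List A := fun x =>
      if h : ∃ i : ℕ, p[i]? = some (Sum.inr x) then (L[Nat.find h]?).getD [] else []
      with hσdef
    have hocc : ∀ x : Ξ, ∀ i : ℕ, p[i]? = some (Sum.inr x) → L[i]? = some (σ x) := by
      intro x i hi
      have hex : ∃ i : ℕ, p[i]? = some (Sum.inr x) := ⟨i, hi⟩
      have hfind : p[Nat.find hex]? = some (Sum.inr x) := Nat.find_spec hex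
      have hle : Nat.find hex ≤ i := Nat.find_min' hex hi
      have hlt : Nat.find hex < L.length := by
        rw [hlen]; exact (List.getElem?_eq_some_iff.mp hfind).1
      have hl : L[Nat.find hex]? = some (L[Nat.find hex]'hlt) :=
        List.getElem?_eq_some_iff.mpr ⟨hlt, rfl⟩
      rw [key x i hi (Nat.find hex) hfind hle, hl]
      simp [hσdef, hex, hl]
    refine ⟨σ, ?_, ?_⟩
    · intro x hx
      obtain ⟨i, hi⟩ := List.getElem?_of_mem hx
      have hi' : i < p.length := (List.getElem?_eq_some_iff.mp hi).1
      have := (h1 i hi').2 x hi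
      rw [hocc x i hi] at this
      intro hcon
      exact this (by rw [hcon])
    · have : L = p.map (Sum.elim (fun a => [a]) σ) := by
        apply List.ext_getElem?
        intro i
        rcases lt_or_ge i p.length with hi | hi
        · rw [List.getElem?_map]
          have hpi : ∃ e, p[i]? = some e :=
            ⟨p[i], List.getElem?_eq_some_iff.mpr ⟨hi, rfl⟩⟩
          obtain ⟨e, he⟩ := hpi
          rw [he]
          cases e with
          | inl a => simpa using (h1 i hi).1 a he
          | inr x => simpa using hocc x i he
        · rw [List.getElem?_eq_none (by omega), List.getElem?_eq_none (by simp; omega)]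
      rw [applySubst, ← this]
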